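/- Let k be a field, let n ≥ 1 and r ≥ 1 be integers, let ζ ∈ k be a primitive r-th root of unity, fix j₀ ∈ {1,…,n}, write A = k[X₁,…,Xₙ] with fraction field L = Frac(A), and let Φ : L → L be the field homomorphism induced (via the universal property of the fraction field) by the injective k-algebra endomorphism of A sending X_i ↦ X_i for i ≠ j₀ and X_{j₀} ↦ X_{j₀}^r. Let p', q' be natural numbers and let θ ∈ L be nonzero. Then the following are equivalent: (i) Φ(θ) · ((r·1_k) · X_{j₀}^{r−1})^{q'−p'} lies in the image of A in L (the integer power q'−p' being taken in the field L); (ii) there exist an integer m and a polynomial g ∈ A not divisible by X_{j₀} such that θ = X_{j₀}^m · g in L and (r−1)(q'−p') + r·m ≥ 0. -/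

import Mathlib

open MvPolynomial

namespace Stmt8Aux

variable {k : Type*} [Field k] {n : ℕ}

/-- The substitution `X_{j₀} ↦ X_{j₀}^r`. -/
noncomputable def ψA (r : ℕ) (j₀ : Fin n) :
    MvPolynomial (Fin n) k →ₐ[k] MvPolynomial (Fin n) k :=
  aeval (Function.update X j₀ (X j₀ ^ r))

/-- The substitution `X_{j₀} ↦ ζ·X_{j₀}`. -/
noncomputable def σA (ζ : k) (j₀ : Fin n) :
    MvPolynomial (Fin n) k →ₐ[k] MvPolynomial (Fin n) k :=
  aeval (Function.update X j₀ (C ζ * X j₀))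

lemma prod_update (j₀ : Fin n) (v : MvPolynomial (Fin n) k) (d : Fin n →₀ ℕ) :
    (d.prod fun i e => Function.update X j₀ v i ^ e)
      = v ^ (d j₀) * (d.erase j₀).prod fun i e => (X i : MvPolynomial (Fin n) k) ^ e := by
  classical
  have h2 : ((d.erase j₀).prod fun i e => Function.update X j₀ v i ^ e)
      = (d.erase j₀).prod fun i e => (X i : MvPolynomial (Fin n) k) ^ e := by
    refine Finsupp.prod_congr fun i hi => ?_
    have hij : i ≠ j₀ := by
      have : i ∈ d.support.erase j₀ := by rwa [← Finsupp.support_erase]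
      exact Finset.ne_of_mem_erase this
    rw [Function.update_of_ne hij]
  conv_lhs => rw [← Finsupp.erase_add_single j₀ d]
  rw [Finsupp.prod_add_index' (fun a => pow_zero _) (fun a b₁ b₂ => pow_add _ _ _), h2,
    mul_comm]
  congr 1
  exact (Finsupp.prod_single_index (h := fun i e => Function.update X j₀ v i ^ e)
    (pow_zero _)).trans (congrArg (· ^ d j₀) (Function.update_self j₀ v X))

lemma aeval_update_monomial (j₀ : Fin n) (v : MvPolynomial (Fin n) k) (d : Fin n →₀ ℕ)
    (c : k) :
    aeval (Function.update X j₀ v) (monomial d c)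
      = v ^ (d j₀) * (C c * (d.erase j₀).prod fun i e => (X i : MvPolynomial (Fin n) k) ^ e) := by
  rw [aeval_monomial, prod_update, algebraMap_eq]
  ring

lemma monomial_split (j₀ : Fin n) (d : Fin n →₀ ℕ) (c : k) :
    (monomial d c : MvPolynomial (Fin n) k)
      = X j₀ ^ (d j₀) * (C c * (d.erase j₀).prod fun i e => X i ^ e) := by
  have h := prod_update (k := k) j₀ (X j₀) d
  rw [Function.update_eq_self j₀ (X : Fin n → MvPolynomial (Fin n) k)] at h
  rw [monomial_eq, h]
  ring

lemma sigma_monomial (ζ : k) (j₀ : Fin n) (d : Fin n →₀ ℕ) (c : k) :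
    σA ζ j₀ (monomial d c) = monomial d (ζ ^ (d j₀) * c) := by
  rw [σA, aeval_update_monomial, ← C_mul_monomial, monomial_split j₀ d c, mul_pow, ← C_pow]
  ring

lemma coeff_sigma (ζ : k) (j₀ : Fin n) (p : MvPolynomial (Fin n) k) (d : Fin n →₀ ℕ) :
    coeff d (σA ζ j₀ p) = ζ ^ (d j₀) * coeff d p := by
  classical
  induction p using MvPolynomial.induction_on' with
  | monomial d' c =>
    rw [sigma_monomial, coeff_monomial, coeff_monomial]
    split_ifs with h
    · subst h; rfl
    · rw [mul_zero]
  | add p q hp hq => rw [map_add, coeff_add, coeff_add, hp, hq, mul_add]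

lemma psiA_X_self (r : ℕ) (j₀ : Fin n) :
    ψA (k := k) r j₀ (X j₀) = X j₀ ^ r := by
  rw [ψA, aeval_X, Function.update_self]

lemma sigma_psi {r : ℕ} {ζ : k} (hζr : ζ ^ r = 1) (j₀ : Fin n)
    (p : MvPolynomial (Fin n) k) : σA ζ j₀ (ψA r j₀ p) = ψA r j₀ p := by
  have h : (σA ζ j₀).comp (ψA (k := k) r j₀) = ψA r j₀ := by
    apply algHom_ext
    intro i
    by_cases hi : i = j₀
    · subst hi
      rw [AlgHom.comp_apply, psiA_X_self, map_pow, σA, aeval_X, Function.update_self,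
        mul_pow, ← C_pow, hζr, C_1, one_mul]
    · simp only [AlgHom.comp_apply, ψA, σA, aeval_X, Function.update_of_ne hi]
  exact DFunLike.congr_fun h p

lemma prime_X_var (j₀ : Fin n) : Prime (X j₀ : MvPolynomial (Fin n) k) := by
  classical
  set ev : MvPolynomial (Fin n) k →ₐ[k] MvPolynomial (Fin n) k :=
    aeval (Function.update X j₀ 0) with hev
  have hevX : ev (X j₀) = 0 := by rw [hev, aeval_X, Function.update_self]
  have hdvd : ∀ p : MvPolynomial (Fin n) k, X j₀ ∣ p - ev p := by
    intro p
    induction p using MvPolynomial.induction_on with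
    | C a =>
      rw [hev, aeval_C, algebraMap_eq, sub_self]
      exact dvd_zero _
    | add p q hp hq =>
      have := dvd_add hp hq
      rw [map_add]
      convert this using 1
      ring
    | mul_X p i hp =>
      rw [map_mul]
      by_cases hi : i = j₀
      · subst hi
        rw [hevX, mul_zero, sub_zero]
        exact dvd_mul_left _ _
      · rw [hev, aeval_X, Function.update_of_ne hi]
        have h2 : p * X i - ev p * X i = (p - ev p) * X i := by ring
        rw [← hev, h2]
        exact hp.mul_right _
  refine ⟨X_ne_zero j₀, ?_, ?_⟩
  · intro hu
    have := hu.map ev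
    rw [hevX] at this
    exact one_ne_zero ((isUnit_zero_iff.mp this).symm)
  · intro p q hpq
    have h1 : ev p * ev q = 0 := by
      obtain ⟨c, hc⟩ := hpq
      rw [← map_mul, hc, map_mul, hevX, zero_mul]
    rcases mul_eq_zero.mp h1 with h | h
    · left; have := hdvd p; rwa [h, sub_zero] at this
    · right; have := hdvd q; rwa [h, sub_zero] at this

lemma pow_mod_eq {r : ℕ} (hr : 1 ≤ r) {ζ : k} (hζ : IsPrimitiveRoot ζ r) {x y : ℕ}
    (h : ζ ^ x = ζ ^ y) : x % r = y % r := by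
  have key : ∀ z : ℕ, ζ ^ (z % r) = ζ ^ z := by
    intro z
    conv_rhs => rw [← Nat.mod_add_div z r]
    rw [pow_add, pow_mul, hζ.pow_eq_one, one_pow, mul_one]
  exact hζ.pow_inj (Nat.mod_lt _ hr) (Nat.mod_lt _ hr) (by rw [key, key, h])

lemma support_cong {r : ℕ} (hr : 1 ≤ r) {ζ : k} (hζ : IsPrimitiveRoot ζ r) (j₀ : Fin n)
    (a b h : MvPolynomial (Fin n) k) (hb : ψA r j₀ b ≠ 0) (α β : ℕ)
    (hM : ψA r j₀ a * X j₀ ^ α = h * X j₀ ^ β * ψA r j₀ b) :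
    ∀ d ∈ h.support, (β + d j₀) % r = α % r := by
  have hσX : σA ζ j₀ (X j₀) = C ζ * X j₀ := by rw [σA, aeval_X, Function.update_self]
  have h2 := congrArg (σA ζ j₀) hM
  rw [map_mul, map_mul, map_mul, map_pow, map_pow, sigma_psi hζ.pow_eq_one,
    sigma_psi hζ.pow_eq_one, hσX, mul_pow, mul_pow, ← C_pow, ← C_pow] at h2
  have hcan : (X j₀ : MvPolynomial (Fin n) k) ^ β * ψA r j₀ b ≠ 0 :=
    mul_ne_zero (pow_ne_zero _ (X_ne_zero _)) hb
  have h4 : (C (ζ ^ α) * h) * (X j₀ ^ β * ψA r j₀ b)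
      = (C (ζ ^ β) * σA ζ j₀ h) * (X j₀ ^ β * ψA r j₀ b) := by
    linear_combination h2 - C (ζ ^ α) * hM
  have h5 := mul_right_cancel₀ hcan h4
  intro d hd
  have h6 := congrArg (coeff d) h5
  rw [coeff_C_mul, coeff_C_mul, coeff_sigma] at h6
  have hc0 : coeff d h ≠ 0 := mem_support_iff.mp hd
  have h7 : ζ ^ (β + d j₀) = ζ ^ α := by
    have h8 : ζ ^ (β + d j₀) * coeff d h = ζ ^ α * coeff d h := by
      rw [pow_add, h6]; ring
    exact mul_right_cancel₀ hc0 h8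
  exact pow_mod_eq hr hζ h7

lemma erase_update (j₀ : Fin n) (d : Fin n →₀ ℕ) (v : ℕ) :
    (Finsupp.update d j₀ v).erase j₀ = d.erase j₀ := by
  classical
  ext i
  by_cases hi : i = j₀
  · subst hi; rw [Finsupp.erase_same, Finsupp.erase_same]
  · rw [Finsupp.erase_ne hi, Finsupp.erase_ne hi, Finsupp.coe_update,
      Function.update_of_ne hi]

lemma factor_out {r : ℕ} (hr : 1 ≤ r) (j₀ : Fin n) (h : MvPolynomial (Fin n) k) (j : ℕ)
    (hsup : ∀ d ∈ h.support, d j₀ % r = j) :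
    ∃ h', h = X j₀ ^ j * ψA r j₀ h' := by
  classical
  refine ⟨∑ d ∈ h.support, monomial (Finsupp.update d j₀ (d j₀ / r)) (coeff d h), ?_⟩
  rw [map_sum, Finset.mul_sum]
  conv_lhs => rw [← support_sum_monomial_coeff h]
  refine Finset.sum_congr rfl fun d hd => ?_
  rw [ψA, aeval_update_monomial, erase_update]
  have hupd : (Finsupp.update d j₀ (d j₀ / r)) j₀ = d j₀ / r := by
    rw [Finsupp.coe_update, Function.update_self]
  rw [hupd, monomial_split j₀ d, ← pow_mul]
  have hde : j + r * (d j₀ / r) = d j₀ := by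
    rw [← hsup d hd]; exact Nat.mod_add_div _ _
  have h9 : (X j₀ : MvPolynomial (Fin n) k) ^ j * X j₀ ^ (r * (d j₀ / r)) = X j₀ ^ (d j₀) := by
    rw [← pow_add, hde]
  conv_rhs => rw [← mul_assoc, h9]

end Stmt8Aux

open Stmt8Aux

/-- Theorem 3.8.1 expressed coefficientwise in the
étale-local cyclic model.  Let `A = k[X₁,…,Xₙ]` with fraction field `L`, and
let `Φ : L → L` be the field homomorphism induced by the injective `k`-algebra
endomorphism `ψ` of `A` with `ψ(Xᵢ) = Xᵢ` for `i ≠ j₀` and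
`ψ(X_{j₀}) = X_{j₀}^r`.  For `p', q' ∈ ℕ` and `θ ∈ L` nonzero, the element
`Φ(θ) · (r · X_{j₀}^{r−1})^{q'−p'}` of `L` is a polynomial iff
`θ = X_{j₀}^m · g` with `g` a polynomial not divisible by `X_{j₀}` and
`(r−1)(q'−p') + r·m ≥ 0`. -/
theorem stmt8 {k : Type*} [Field k] (n r : ℕ) (hn : 1 ≤ n) (hr : 1 ≤ r)
    (ζ : k) (hζ : IsPrimitiveRoot ζ r) (j₀ : Fin n)
    (ψ : MvPolynomial (Fin n) k →ₐ[k] MvPolynomial (Fin n) k)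
    (hψ : ∀ i : Fin n, i ≠ j₀ → ψ (X i) = X i)
    (hψ' : ψ (X j₀) = X j₀ ^ r)
    (hψinj : Function.Injective ψ)
    (Φ : FractionRing (MvPolynomial (Fin n) k) →+*
      FractionRing (MvPolynomial (Fin n) k))
    (hΦ : ∀ a : MvPolynomial (Fin n) k,
      Φ (algebraMap (MvPolynomial (Fin n) k) (FractionRing (MvPolynomial (Fin n) k)) a) =
        algebraMap (MvPolynomial (Fin n) k) (FractionRing (MvPolynomial (Fin n) k)) (ψ a))
    (p' q' : ℕ) (θ : FractionRing (MvPolynomial (Fin n) k)) (hθ : θ ≠ 0) :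
    (Φ θ * (algebraMap (MvPolynomial (Fin n) k) (FractionRing (MvPolynomial (Fin n) k))
          (C (r : k) * X j₀ ^ (r - 1))) ^ ((q' : ℤ) - (p' : ℤ)) ∈
        Set.range (algebraMap (MvPolynomial (Fin n) k)
          (FractionRing (MvPolynomial (Fin n) k)))) ↔
      (∃ (m : ℤ) (g : MvPolynomial (Fin n) k), ¬ (X j₀ ∣ g) ∧
        θ = (algebraMap (MvPolynomial (Fin n) k) (FractionRing (MvPolynomial (Fin n) k)) (X j₀)) ^ m *
          algebraMap (MvPolynomial (Fin n) k) (FractionRing (MvPolynomial (Fin n) k)) g ∧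
        0 ≤ ((r : ℤ) - 1) * ((q' : ℤ) - (p' : ℤ)) + r * m) := by
  classical
  have hrpos : 0 < r := hr
  haveI : NeZero r := ⟨by omega⟩
  have hrk : ((r : ℕ) : k) ≠ 0 := hζ.neZero'.out
  set u := algebraMap (MvPolynomial (Fin n) k) (FractionRing (MvPolynomial (Fin n) k))
    with hu
  have huinj : Function.Injective u := IsFractionRing.injective _ _
  have hX0 : (X j₀ : MvPolynomial (Fin n) k) ≠ 0 := X_ne_zero _
  set t := u (X j₀) with htdef
  have ht : t ≠ 0 := fun h0 => hX0 (huinj (h0.trans (map_zero u).symm))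
  have hψe : ψ = ψA r j₀ := by
    apply algHom_ext
    intro i
    by_cases hi : i = j₀
    · subst hi; rw [hψ', psiA_X_self]
    · rw [hψ i hi]
      simp only [ψA, aeval_X, Function.update_of_ne hi]
  set e : ℤ := (q' : ℤ) - (p' : ℤ) with hedef
  set s : ℤ := ((r : ℤ) - 1) * e with hsdef
  have hΦt : Φ t = t ^ (r : ℕ) := by rw [htdef, hΦ, hψ', map_pow]
  -- Step A : reduce to `Φ θ * t ^ s`
  have hpow : (u (C ((r : ℕ) : k) * X j₀ ^ (r - 1))) ^ e
      = u (C (((r : ℕ) : k) ^ e)) * t ^ s := by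
    rw [map_mul, map_pow, mul_zpow]
    congr 1
    · exact (map_zpow₀ (u.comp (C : k →+* MvPolynomial (Fin n) k)) ((r : ℕ) : k) e).symm
    · rw [← htdef, ← zpow_natCast t (r - 1), ← zpow_mul]
      congr 1
      rw [hsdef, Nat.cast_sub hr]
      ring
  have keyiff : (Φ θ * u (C ((r : k)) * X j₀ ^ (r - 1)) ^ e ∈ Set.range u)
      ↔ Φ θ * t ^ s ∈ Set.range u := by
    rw [hpow, show Φ θ * (u (C (((r : ℕ) : k) ^ e)) * t ^ s)
      = (Φ θ * t ^ s) * u (C (((r : ℕ) : k) ^ e)) by ring]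
    have hγ : ((r : ℕ) : k) ^ e ≠ 0 := zpow_ne_zero e hrk
    constructor
    · rintro ⟨y, hy⟩
      refine ⟨C (((r : ℕ) : k) ^ e)⁻¹ * y, ?_⟩
      rw [map_mul, hy, ← mul_assoc, mul_comm (u (C (((r : ℕ) : k) ^ e)⁻¹)),
        mul_assoc, ← map_mul, ← C_mul, inv_mul_cancel₀ hγ, C_1, map_one, mul_one]
    · rintro ⟨y, hy⟩
      exact ⟨y * C (((r : ℕ) : k) ^ e), by rw [map_mul, hy]⟩
  rw [keyiff]
  have hΦinj : Function.Injective Φ := Φ.injective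
  constructor
  · rintro ⟨h, hh⟩
    obtain ⟨⟨a, b⟩, hab⟩ := IsLocalization.surj (nonZeroDivisors (MvPolynomial (Fin n) k)) θ
    simp only at hab
    have hb0 : (b : MvPolynomial (Fin n) k) ≠ 0 := nonZeroDivisors.ne_zero b.2
    have hΦθ : Φ θ ≠ 0 := fun h0 => hθ (hΦinj (h0.trans (map_zero Φ).symm))
    have hts : t ^ s ≠ 0 := zpow_ne_zero _ ht
    have hh0 : h ≠ 0 := by
      intro h0; rw [h0, map_zero] at hh; exact (mul_ne_zero hΦθ hts) hh.symm
    have hab' : Φ θ * u (ψA r j₀ (b : MvPolynomial (Fin n) k)) = u (ψA r j₀ a) := by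
      rw [← hψe, ← hΦ, ← hΦ, ← map_mul, hab]
    have hψb0 : ψA r j₀ (b : MvPolynomial (Fin n) k) ≠ 0 := by
      rw [← hψe]
      exact fun h0 => hb0 (hψinj (h0.trans (map_zero ψ).symm))
    obtain ⟨α, β, hαβ, hM⟩ :
        ∃ α β : ℕ, (α : ℤ) - (β : ℤ) = s ∧
          ψA r j₀ a * X j₀ ^ α = h * X j₀ ^ β * ψA r j₀ (b : MvPolynomial (Fin n) k) := by
      rcases le_or_gt 0 s with hs | hs
      · refine ⟨s.toNat, 0, by rw [Int.toNat_of_nonneg hs]; ring, ?_⟩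
        have h1 : t ^ (s.toNat) = t ^ s := by
          rw [← zpow_natCast, Int.toNat_of_nonneg hs]
        apply huinj
        rw [map_mul, map_mul, map_mul, map_pow, map_pow, ← htdef, pow_zero, mul_one, h1,
          ← hab', hh]
        ring
      · refine ⟨0, (-s).toNat, by rw [Int.toNat_of_nonneg (by omega : (0:ℤ) ≤ -s)]; ring, ?_⟩
        have h1 : t ^ ((-s).toNat) = t ^ (-s) := by
          rw [← zpow_natCast, Int.toNat_of_nonneg (by omega : (0:ℤ) ≤ -s)]
        apply huinj
        rw [map_mul, map_mul, map_mul, map_pow, map_pow, ← htdef, pow_zero, mul_one, h1,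
          ← hab', hh]
        have h2 : t ^ s * t ^ (-s) = 1 := by
          rw [← zpow_add₀ ht, add_neg_cancel, zpow_zero]
        linear_combination (-(Φ θ * u (ψA r j₀ (b : MvPolynomial (Fin n) k)))) * h2
    have hsupp := support_cong hr hζ j₀ a (b : MvPolynomial (Fin n) k) h hψb0 α β hM
    have hj0 : 0 ≤ s % (r : ℤ) := Int.emod_nonneg s (by exact_mod_cast hrpos.ne')
    have hjr : s % (r : ℤ) < r := Int.emod_lt_of_pos s (by exact_mod_cast hrpos)
    have hsq : (r : ℤ) * (s / (r : ℤ)) + s % (r : ℤ) = s := Int.mul_ediv_add_emod s r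
    set q : ℤ := s / (r : ℤ) with hq
    set j : ℕ := (s % (r : ℤ)).toNat with hj
    have hjcast : (j : ℤ) = s % (r : ℤ) := Int.toNat_of_nonneg hj0
    have hsupj : ∀ d ∈ h.support, d j₀ % r = j := by
      intro d hd
      have h8 := hsupp d hd
      have h9 : ((β : ℤ) + (d j₀ : ℤ)) % (r : ℤ) = ((α : ℤ)) % (r : ℤ) := by
        have := congrArg (Nat.cast : ℕ → ℤ) h8
        rwa [Int.natCast_mod, Int.natCast_mod, Nat.cast_add] at this
      have h10 : ((d j₀ : ℤ)) % (r : ℤ) = s % (r : ℤ) := by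
        have hmodeq : ((β : ℤ) + (d j₀ : ℤ)) ≡ (α : ℤ) [ZMOD (r : ℤ)] := h9
        have hdvd : (r : ℤ) ∣ ((α : ℤ) - ((β : ℤ) + (d j₀ : ℤ))) := Int.ModEq.dvd hmodeq
        have : ((d j₀ : ℤ)) ≡ s [ZMOD (r : ℤ)] := by
          rw [Int.modEq_iff_dvd]
          have h11 : s - (d j₀ : ℤ) = (α : ℤ) - ((β : ℤ) + (d j₀ : ℤ)) := by
            rw [← hαβ]; ring
          rw [h11]; exact hdvd
        exact this
      have h12 : ((d j₀ % r : ℕ) : ℤ) = (j : ℤ) := by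
        rw [Int.natCast_mod, hjcast, h10]
      exact_mod_cast h12
    obtain ⟨h', hfac⟩ := factor_out hr j₀ h j hsupj
    have hh'0 : h' ≠ 0 := by
      rintro rfl; rw [map_zero, mul_zero] at hfac; exact hh0 hfac
    obtain ⟨m', g, hgnd, hgfac⟩ :=
      WfDvdMonoid.max_power_factor hh'0 (prime_X_var j₀).irreducible
    have hA : h = X j₀ ^ (j + r * m') * ψA r j₀ g := by
      rw [hfac, hgfac, map_mul, map_pow, psiA_X_self, pow_add, pow_mul]
      ring
    have h11 : u h = t ^ ((j : ℤ) + (r : ℤ) * (m' : ℤ)) * u (ψA r j₀ g) := by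
      rw [hA, map_mul, map_pow, ← htdef,
        show ((j : ℤ) + (r : ℤ) * (m' : ℤ)) = ((j + r * m' : ℕ) : ℤ) by push_cast; ring,
        zpow_natCast]
    have hsq' : (r : ℤ) * q + (j : ℤ) = s := by rw [hjcast]; exact hsq
    have hexp : ((j : ℤ) + (r : ℤ) * (m' : ℤ)) - s = (r : ℤ) * ((m' : ℤ) - q) := by
      rw [← hsq']; ring
    have hΦθ2 : Φ θ = t ^ ((r : ℤ) * ((m' : ℤ) - q)) * u (ψA r j₀ g) := by
      have h12 : Φ θ = u h * (t ^ s)⁻¹ := by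
        rw [hh, mul_assoc, mul_inv_cancel₀ hts, mul_one]
      rw [h12, h11, ← hexp, zpow_sub₀ ht, div_eq_mul_inv]
      ring
    refine ⟨(m' : ℤ) - q, g, hgnd, ?_, ?_⟩
    · apply hΦinj
      rw [map_mul, map_zpow₀, hΦt, hΦ, hψe, hΦθ2, ← zpow_natCast t r, ← zpow_mul]
    · have h13 : s + (r : ℤ) * ((m' : ℤ) - q) = (j : ℤ) + (r : ℤ) * (m' : ℤ) := by
        rw [← hsq']; ring
      rw [h13]
      positivity
  · rintro ⟨m, g, hgnd, hθeq, hineq⟩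
    have hΦθ2 : Φ θ * t ^ s = t ^ ((r : ℤ) * m + s) * u (ψA r j₀ g) := by
      rw [hθeq, map_mul, map_zpow₀, hΦt, hΦ, hψe, ← zpow_natCast t r, ← zpow_mul,
        zpow_add₀ ht]
      ring
    have hN : (0 : ℤ) ≤ (r : ℤ) * m + s := by linarith [hineq]
    refine ⟨X j₀ ^ ((r : ℤ) * m + s).toNat * ψA r j₀ g, ?_⟩
    rw [map_mul, map_pow, ← htdef, hΦθ2, ← zpow_natCast t (((r : ℤ) * m + s).toNat),
      Int.toNat_of_nonneg hN]
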